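/- For (ω₁, t₁), (ω₂, t₂) ∈ ℝ^d × ℝ with |ω₁|₁ = |ω₂|₁ = 1 and t₁, t₂ ∈ [−1,1], and Ω = (0,1)^d, the ReLU ridge functions satisfy ‖σ(ω₁·x + t₁) − σ(ω₂·x + t₂)‖²_{H¹(Ω)} ≤ 4(|ω₁ − ω₂|₁² + |t₁ − t₂|²) + 2 ∫_Ω |1_{ω₁·x + t₁ ≥ 0} − 1_{ω₂·x + t₂ ≥ 0}|² dx. -/

import Mathlib

open MeasureTheory

/-- `H¹((0,1)^d)` distance bound between two ReLU ridge functions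
`σ(ω₁·x + t₁)` and `σ(ω₂·x + t₂)` with `|ω₁|₁ = |ω₂|₁ = 1`, `t₁, t₂ ∈ [-1,1]`:
the squared `H¹` norm of the difference (with weak gradients `ωₖ 1_{ωₖ·x+tₖ ≥ 0}`)
is at most `4(|ω₁-ω₂|₁² + |t₁-t₂|²) + 2∫ |1_{ω₁·x+t₁≥0} - 1_{ω₂·x+t₂≥0}|²`. -/
theorem relu_ridge_H1_bound (d : ℕ) (ω₁ ω₂ : Fin d → ℝ) (t₁ t₂ : ℝ)
    (hω₁ : ∑ i, |ω₁ i| = 1) (hω₂ : ∑ i, |ω₂ i| = 1)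
    (ht₁ : t₁ ∈ Set.Icc (-1 : ℝ) 1) (ht₂ : t₂ ∈ Set.Icc (-1 : ℝ) 1) :
    (∫ x in Set.univ.pi (fun _ : Fin d => Set.Ioo (0 : ℝ) 1),
        (max (∑ i, ω₁ i * x i + t₁) 0 - max (∑ i, ω₂ i * x i + t₂) 0) ^ 2) +
      (∫ x in Set.univ.pi (fun _ : Fin d => Set.Ioo (0 : ℝ) 1),
        ∑ i, (ω₁ i * (if 0 ≤ ∑ j, ω₁ j * x j + t₁ then (1 : ℝ) else 0) -
              ω₂ i * (if 0 ≤ ∑ j, ω₂ j * x j + t₂ then (1 : ℝ) else 0)) ^ 2) ≤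
    4 * ((∑ i, |ω₁ i - ω₂ i|) ^ 2 + |t₁ - t₂| ^ 2) +
      2 * ∫ x in Set.univ.pi (fun _ : Fin d => Set.Ioo (0 : ℝ) 1),
        ((if 0 ≤ ∑ j, ω₁ j * x j + t₁ then (1 : ℝ) else 0) -
          (if 0 ≤ ∑ j, ω₂ j * x j + t₂ then (1 : ℝ) else 0)) ^ 2 := by
  set Ω : Set (Fin d → ℝ) := Set.univ.pi (fun _ : Fin d => Set.Ioo (0 : ℝ) 1) with hΩdef
  have hΩm : MeasurableSet Ω := MeasurableSet.univ_pi fun _ => measurableSet_Ioo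
  have hΩvol : volume Ω = 1 := by rw [hΩdef, volume_pi_pi]; simp
  set A : ℝ := ∑ i, |ω₁ i - ω₂ i| with hA
  set B : ℝ := |t₁ - t₂| with hB
  have hA0 : 0 ≤ A := Finset.sum_nonneg fun i _ => abs_nonneg _
  have hB0 : 0 ≤ B := abs_nonneg _
  have hf₁ : Measurable (fun x : Fin d → ℝ => ∑ j, ω₁ j * x j + t₁) := by fun_prop
  have hf₂ : Measurable (fun x : Fin d → ℝ => ∑ j, ω₂ j * x j + t₂) := by fun_prop
  set χ₁ : (Fin d → ℝ) → ℝ := fun x => if 0 ≤ ∑ j, ω₁ j * x j + t₁ then (1 : ℝ) else 0 with hχ₁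
  set χ₂ : (Fin d → ℝ) → ℝ := fun x => if 0 ≤ ∑ j, ω₂ j * x j + t₂ then (1 : ℝ) else 0 with hχ₂
  have hχ₁m : Measurable χ₁ :=
    Measurable.ite (measurableSet_le measurable_const hf₁) measurable_const measurable_const
  have hχ₂m : Measurable χ₂ :=
    Measurable.ite (measurableSet_le measurable_const hf₂) measurable_const measurable_const
  have hχ₁01 : ∀ x, χ₁ x = 0 ∨ χ₁ x = 1 := by
    intro x; by_cases h : 0 ≤ ∑ j, ω₁ j * x j + t₁ <;> simp [hχ₁, h]
  have hχ₂01 : ∀ x, χ₂ x = 0 ∨ χ₂ x = 1 := by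
    intro x; by_cases h : 0 ≤ ∑ j, ω₂ j * x j + t₂ <;> simp [hχ₂, h]
  set g0 : (Fin d → ℝ) → ℝ :=
    fun x => (max (∑ i, ω₁ i * x i + t₁) 0 - max (∑ i, ω₂ i * x i + t₂) 0) ^ 2 with hg0
  set g1 : (Fin d → ℝ) → ℝ := fun x => ∑ i, (ω₁ i * χ₁ x - ω₂ i * χ₂ x) ^ 2 with hg1
  set g2 : (Fin d → ℝ) → ℝ := fun x => (χ₁ x - χ₂ x) ^ 2 with hg2
  have hg0m : Measurable g0 :=
    ((hf₁.max measurable_const).sub (hf₂.max measurable_const)).pow_const 2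
  have hg1m : Measurable g1 :=
    Finset.measurable_sum _ fun i _ =>
      ((hχ₁m.const_mul _).sub (hχ₂m.const_mul _)).pow_const 2
  have hg2m : Measurable g2 := (hχ₁m.sub hχ₂m).pow_const 2
  have hfin : volume Ω < ⊤ := by rw [hΩvol]; exact ENNReal.one_lt_top
  haveI : Fact (volume Ω < ⊤) := ⟨hfin⟩
  have bχ : ∀ (f : (Fin d → ℝ) → ℝ), (∀ x, f x = 0 ∨ f x = 1) → ∀ x, |f x| ≤ 1 := by
    intro f h x; rcases h x with h' | h' <;> simp [h']
  -- integrability of g1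
  have hig1 : IntegrableOn g1 Ω := by
    apply Integrable.mono' (integrable_const ((∑ i, ((|ω₁ i| + |ω₂ i|) ^ 2) : ℝ)))
      hg1m.aestronglyMeasurable.restrict
    filter_upwards with x
    rw [hg1]
    rw [Real.norm_eq_abs, abs_of_nonneg (Finset.sum_nonneg fun i _ => sq_nonneg _)]
    apply Finset.sum_le_sum
    intro i _
    have h1 := bχ χ₁ hχ₁01 x
    have h2 := bχ χ₂ hχ₂01 x
    have hb : |ω₁ i * χ₁ x - ω₂ i * χ₂ x| ≤ |ω₁ i| + |ω₂ i| := by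
      calc |ω₁ i * χ₁ x - ω₂ i * χ₂ x| ≤ |ω₁ i * χ₁ x| + |ω₂ i * χ₂ x| := abs_sub _ _
      _ ≤ |ω₁ i| + |ω₂ i| := by
          rw [abs_mul, abs_mul]
          gcongr
          · calc |ω₁ i| * |χ₁ x| ≤ |ω₁ i| * 1 := by gcongr
            _ = |ω₁ i| := mul_one _
          · calc |ω₂ i| * |χ₂ x| ≤ |ω₂ i| * 1 := by gcongr
            _ = |ω₂ i| := mul_one _
    calc (ω₁ i * χ₁ x - ω₂ i * χ₂ x) ^ 2 = |ω₁ i * χ₁ x - ω₂ i * χ₂ x| ^ 2 := (sq_abs _).symm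
    _ ≤ (|ω₁ i| + |ω₂ i|) ^ 2 := pow_le_pow_left₀ (abs_nonneg _) hb 2
  -- integrability of g2
  have hig2 : IntegrableOn g2 Ω := by
    apply Integrable.mono' (integrable_const (4 : ℝ)) hg2m.aestronglyMeasurable.restrict
    filter_upwards with x
    have h1 := bχ χ₁ hχ₁01 x
    have h2 := bχ χ₂ hχ₂01 x
    have hg2x : g2 x = (χ₁ x - χ₂ x) ^ 2 := rfl
    rw [Real.norm_eq_abs, hg2x, abs_of_nonneg (sq_nonneg _)]
    have habs : |χ₁ x - χ₂ x| ≤ 2 := by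
      calc |χ₁ x - χ₂ x| ≤ |χ₁ x| + |χ₂ x| := abs_sub _ _
      _ ≤ 2 := by linarith
    calc (χ₁ x - χ₂ x) ^ 2 = |χ₁ x - χ₂ x| ^ 2 := (sq_abs _).symm
    _ ≤ 2 ^ 2 := pow_le_pow_left₀ (abs_nonneg _) habs 2
    _ = 4 := by norm_num
  -- integrability of g0
  have hig0 : IntegrableOn g0 Ω := by
    apply Integrable.mono' (integrable_const (16 : ℝ)) hg0m.aestronglyMeasurable.restrict
    rw [ae_restrict_iff' hΩm]
    filter_upwards with x hx
    have hxb : ∀ i, |x i| ≤ 1 := by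
      intro i
      have := hx i (Set.mem_univ i)
      rw [abs_le]; constructor <;> [linarith [this.1]; linarith [this.2]]
    have key : ∀ (ω : Fin d → ℝ) (t : ℝ), (∑ i, |ω i| = 1) → t ∈ Set.Icc (-1:ℝ) 1 →
        |max (∑ i, ω i * x i + t) 0| ≤ 2 := by
      intro ω t hω ht
      have h1 : |∑ i, ω i * x i + t| ≤ 2 := by
        calc |∑ i, ω i * x i + t| ≤ |∑ i, ω i * x i| + |t| := abs_add_le _ _
        _ ≤ (∑ i, |ω i * x i|) + 1 := by
            gcongr
            · exact Finset.abs_sum_le_sum_abs _ _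
            · rw [abs_le]; exact ⟨ht.1, ht.2⟩
        _ ≤ (∑ i, |ω i|) + 1 := by
            apply add_le_add_left
            apply Finset.sum_le_sum
            intro i _
            rw [abs_mul]
            calc |ω i| * |x i| ≤ |ω i| * 1 := by gcongr; exact hxb i
            _ = |ω i| := mul_one _
        _ = 2 := by rw [hω]; norm_num
      rcases le_or_gt (∑ i, ω i * x i + t) 0 with h | h
      · rw [max_eq_right h]; simp
      · rw [max_eq_left h.le]; exact h1
    have k1 := key ω₁ t₁ hω₁ ht₁
    have k2 := key ω₂ t₂ hω₂ ht₂
    have hg0x : g0 x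
        = (max (∑ i, ω₁ i * x i + t₁) 0 - max (∑ i, ω₂ i * x i + t₂) 0) ^ 2 := rfl
    rw [Real.norm_eq_abs, hg0x, abs_of_nonneg (sq_nonneg _)]
    set u := max (∑ i, ω₁ i * x i + t₁) 0
    set v := max (∑ i, ω₂ i * x i + t₂) 0
    have habs : |u - v| ≤ 4 := by
      calc |u - v| ≤ |u| + |v| := abs_sub _ _
      _ ≤ 4 := by linarith
    calc (u - v) ^ 2 = |u - v| ^ 2 := (sq_abs _).symm
    _ ≤ 4 ^ 2 := pow_le_pow_left₀ (abs_nonneg _) habs 2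
    _ = 16 := by norm_num
  -- main pointwise bound
  have hpt : ∀ x ∈ Ω, g0 x + g1 x ≤ 4 * (A ^ 2 + B ^ 2) + 2 * g2 x := by
    intro x hx
    have hxb : ∀ i, |x i| ≤ 1 := by
      intro i
      have := hx i (Set.mem_univ i)
      rw [abs_le]; constructor <;> [linarith [this.1]; linarith [this.2]]
    -- |f₁ - f₂| ≤ A + B
    have hdiff : |(∑ i, ω₁ i * x i + t₁) - (∑ i, ω₂ i * x i + t₂)| ≤ A + B := by
      have heq : (∑ i, ω₁ i * x i + t₁) - (∑ i, ω₂ i * x i + t₂)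
          = (∑ i, (ω₁ i - ω₂ i) * x i) + (t₁ - t₂) := by
        have h' : ∑ i, (ω₁ i - ω₂ i) * x i
            = (∑ i, ω₁ i * x i) - ∑ i, ω₂ i * x i := by
          rw [← Finset.sum_sub_distrib]
          exact Finset.sum_congr rfl fun i _ => by ring
        rw [h']; ring
      rw [heq]
      calc |(∑ i, (ω₁ i - ω₂ i) * x i) + (t₁ - t₂)|
          ≤ |∑ i, (ω₁ i - ω₂ i) * x i| + |t₁ - t₂| := abs_add_le _ _
      _ ≤ (∑ i, |(ω₁ i - ω₂ i) * x i|) + B := by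
          gcongr
          exact Finset.abs_sum_le_sum_abs _ _
      _ ≤ A + B := by
          have : (∑ i, |(ω₁ i - ω₂ i) * x i|) ≤ A := by
            rw [hA]
            apply Finset.sum_le_sum
            intro i _
            rw [abs_mul]
            calc |ω₁ i - ω₂ i| * |x i| ≤ |ω₁ i - ω₂ i| * 1 := by gcongr; exact hxb i
            _ = |ω₁ i - ω₂ i| := mul_one _
          linarith
    -- g0 ≤ (A+B)^2
    have hg0b : g0 x ≤ (A + B) ^ 2 := by
      have h1 : |max (∑ i, ω₁ i * x i + t₁) 0 - max (∑ i, ω₂ i * x i + t₂) 0|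
          ≤ A + B := le_trans (abs_max_sub_max_le_abs _ _ _) hdiff
      calc g0 x = |max (∑ i, ω₁ i * x i + t₁) 0 - max (∑ i, ω₂ i * x i + t₂) 0| ^ 2 :=
            (sq_abs _).symm
      _ ≤ (A + B) ^ 2 := pow_le_pow_left₀ (abs_nonneg _) h1 2
    -- g1 ≤ 2A² + 2 g2
    have hg1b : g1 x ≤ 2 * A ^ 2 + 2 * g2 x := by
      have hterm : ∀ i, (ω₁ i * χ₁ x - ω₂ i * χ₂ x) ^ 2
          ≤ 2 * (ω₁ i - ω₂ i) ^ 2 + 2 * (ω₂ i) ^ 2 * g2 x := by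
        intro i
        have hid : ω₁ i * χ₁ x - ω₂ i * χ₂ x
            = (ω₁ i - ω₂ i) * χ₁ x + ω₂ i * (χ₁ x - χ₂ x) := by ring
        have hχsq : χ₁ x ^ 2 ≤ 1 := by rcases hχ₁01 x with h | h <;> simp [h]
        have hg2x : g2 x = (χ₁ x - χ₂ x) ^ 2 := rfl
        rw [hid, hg2x]
        nlinarith [sq_nonneg ((ω₁ i - ω₂ i) * χ₁ x - ω₂ i * (χ₁ x - χ₂ x)),
          sq_nonneg (ω₁ i - ω₂ i), sq_nonneg (ω₂ i * (χ₁ x - χ₂ x)),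
          mul_self_nonneg ((ω₁ i - ω₂ i) * χ₁ x)]
      have hsum : g1 x ≤ ∑ i, (2 * (ω₁ i - ω₂ i) ^ 2 + 2 * (ω₂ i) ^ 2 * g2 x) :=
        Finset.sum_le_sum fun i _ => hterm i
      have hsq_sum : ∑ i, (ω₁ i - ω₂ i) ^ 2 ≤ A ^ 2 := by
        have := Finset.sum_sq_le_sq_sum_of_nonneg
          (fun i (_ : i ∈ Finset.univ) => abs_nonneg (ω₁ i - ω₂ i))
        simpa [sq_abs] using this
      have hsq_ω₂ : ∑ i, (ω₂ i) ^ 2 ≤ 1 := by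
        have := Finset.sum_sq_le_sq_sum_of_nonneg
          (fun i (_ : i ∈ Finset.univ) => abs_nonneg (ω₂ i))
        rw [hω₂] at this
        simpa [sq_abs] using this
      have hg2nn : 0 ≤ g2 x := sq_nonneg _
      calc g1 x ≤ ∑ i, (2 * (ω₁ i - ω₂ i) ^ 2 + 2 * (ω₂ i) ^ 2 * g2 x) := hsum
      _ = 2 * (∑ i, (ω₁ i - ω₂ i) ^ 2) + 2 * (∑ i, (ω₂ i) ^ 2) * g2 x := by
          rw [Finset.sum_add_distrib, ← Finset.mul_sum, ← Finset.sum_mul, ← Finset.mul_sum]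
      _ ≤ 2 * A ^ 2 + 2 * 1 * g2 x := by gcongr
      _ = 2 * A ^ 2 + 2 * g2 x := by ring
    nlinarith [hg0b, hg1b, sq_nonneg (A - B), sq_nonneg B]
  -- put it together
  have hC : IntegrableOn (fun _ : Fin d → ℝ => 4 * (A ^ 2 + B ^ 2)) Ω := integrable_const _
  have hmono : (∫ x in Ω, (g0 x + g1 x)) ≤ ∫ x in Ω, (4 * (A ^ 2 + B ^ 2) + 2 * g2 x) := by
    apply setIntegral_mono_on (hig0.add hig1) (hC.add (hig2.const_mul 2)) hΩm hpt
  have hsplitL : (∫ x in Ω, (g0 x + g1 x)) = (∫ x in Ω, g0 x) + ∫ x in Ω, g1 x :=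
    integral_add hig0 hig1
  have hsplitR : (∫ x in Ω, (4 * (A ^ 2 + B ^ 2) + 2 * g2 x))
      = 4 * (A ^ 2 + B ^ 2) + 2 * ∫ x in Ω, g2 x := by
    rw [integral_add hC (hig2.const_mul 2), setIntegral_const]
    rw [measureReal_def, hΩvol]
    simp [MeasureTheory.integral_const_mul]
  rw [hsplitL, hsplitR] at hmono
  exact hmono
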